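/- For any positive integers l ≤ t, each right coset of S_l in S_t contains a permutation ρ such that for every λ ∈ S_l, the minimal number of transpositions needed to write λρ equals the minimal number needed for ρ plus the minimal number needed for λ; i.e., |λρ| = |λ| + |ρ| for all λ ∈ S_l. -/

import Mathlib

/-- Minimal number of transpositions whose product is `σ`. -/
noncomputable def transLen {t : ℕ} (σ : Equiv.Perm (Fin t)) : ℕ :=
  sInf {n | ∃ L : List (Equiv.Perm (Fin t)),
    L.length = n ∧ (∀ τ ∈ L, τ.IsSwap) ∧ L.prod = σ}

open Equiv Equiv.Perm

namespace StmtAux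

variable {t : ℕ}


/-- Number of cycles (orbits, including fixed points). -/
noncomputable def cyc (σ : Perm (Fin t)) : ℕ :=
  Nat.card (Quotient (Equiv.Perm.SameCycle.setoid σ))

lemma sc_pow {σ : Perm (Fin t)} {x y : Fin t} :
    σ.SameCycle x y ↔ ∃ n : ℕ, (σ ^ n) x = y := by
  constructor
  · intro h
    obtain ⟨i, _, hi⟩ := h.exists_pow_eq'
    exact ⟨i, hi⟩
  · rintro ⟨n, rfl⟩
    exact ⟨n, by simp⟩

lemma succ_mod_of_eq {n k : ℕ} (h : n % k + 1 = k) : (n + 1) % k = 0 := by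
  by_cases h1 : k = 1
  · subst h1; simp [Nat.mod_one]
  · have h2 : 1 % k = 1 := Nat.mod_eq_of_lt (by omega)
    rw [Nat.add_mod, h2, h, Nat.mod_self]

lemma succ_mod_of_lt {n k : ℕ} (h : n % k + 1 < k) : (n + 1) % k = n % k + 1 := by
  have h2 : 1 % k = 1 := Nat.mod_eq_of_lt (by omega)
  rw [Nat.add_mod, h2, Nat.mod_eq_of_lt h]

lemma pow_succ_apply (σ : Perm (Fin t)) (n : ℕ) (x : Fin t) :
    (σ ^ (n + 1)) x = σ ((σ ^ n) x) := by
  rw [pow_succ', Equiv.Perm.mul_apply]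

/-- merging two cycles connects `a` and `b`. -/
lemma sameCycle_swap_mul_of_not {σ : Perm (Fin t)} {a b : Fin t} (hab : a ≠ b)
    (h : ¬ σ.SameCycle a b) : (Equiv.swap a b * σ).SameCycle a b := by
  classical
  have hex : ∃ p, 0 < p ∧ (σ ^ p) a = a :=
    ⟨orderOf σ, orderOf_pos σ, by rw [pow_orderOf_eq_one]; rfl⟩
  set p := Nat.find hex with hp
  obtain ⟨hp0, hpa⟩ := Nat.find_spec hex
  have key : ∀ i, i < p → ((Equiv.swap a b * σ) ^ i) a = (σ ^ i) a := by
    intro i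
    induction i with
    | zero => simp
    | succ n ih =>
      intro hn
      have hn' : n < p := Nat.lt_of_succ_lt hn
      rw [pow_succ_apply, ih hn', Equiv.Perm.mul_apply, ← pow_succ_apply]
      have h1 : (σ ^ (n + 1)) a ≠ a := by
        intro hc
        exact Nat.find_min hex hn ⟨Nat.succ_pos n, hc⟩
      have h2 : (σ ^ (n + 1)) a ≠ b := by
        intro hc
        exact h ⟨(n + 1 : ℕ), by exact_mod_cast hc⟩
      exact Equiv.swap_apply_of_ne_of_ne h1 h2
  have hfin : ((Equiv.swap a b * σ) ^ p) a = b := by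
    have hp1 : p = (p - 1) + 1 := (Nat.succ_pred_eq_of_pos hp0).symm
    rw [hp1, pow_succ_apply, key (p - 1) (by omega), Equiv.Perm.mul_apply,
      ← pow_succ_apply, ← hp1, hpa, Equiv.swap_apply_left]
  exact ⟨(p : ℕ), by exact_mod_cast hfin⟩

/-- splitting a cycle disconnects `a` and `b`. -/
lemma not_sameCycle_swap_mul_of {σ : Perm (Fin t)} {a b : Fin t} (hab : a ≠ b)
    (h : σ.SameCycle a b) : ¬ (Equiv.swap a b * σ).SameCycle a b := by
  classical
  have hex : ∃ k, 0 < k ∧ (σ ^ k) a = b := by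
    obtain ⟨i, _, hi⟩ := h.exists_pow_eq'
    refine ⟨i, ?_, hi⟩
    rcases Nat.eq_zero_or_pos i with rfl | hpos
    · exact absurd hi hab
    · exact hpos
  set k := Nat.find hex with hk
  obtain ⟨hk0, hkb⟩ := Nat.find_spec hex
  have key : ∀ n, ((Equiv.swap a b * σ) ^ n) a = (σ ^ (n % k)) a := by
    intro n
    induction n with
    | zero => simp
    | succ n ih =>
      rw [pow_succ_apply, ih, Equiv.Perm.mul_apply, ← pow_succ_apply]
      have hmod : n % k < k := Nat.mod_lt n hk0
      by_cases hc : n % k + 1 = k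
      · have : (σ ^ (n % k + 1)) a = b := by rw [hc, hkb]
        rw [this, Equiv.swap_apply_right]
        rw [succ_mod_of_eq hc, pow_zero]; rfl
      · have hlt : n % k + 1 < k := by omega
        have h1 : (σ ^ (n % k + 1)) a ≠ b := by
          intro hcc
          exact Nat.find_min hex hlt ⟨Nat.succ_pos _, hcc⟩
        have h2 : (σ ^ (n % k + 1)) a ≠ a := by
          intro hcc
          have hkk : (σ ^ (k - (n % k + 1) + (n % k + 1))) a = b := by
            rw [Nat.sub_add_cancel (le_of_lt hlt)]; exact hkb
          rw [pow_add, Equiv.Perm.mul_apply, hcc] at hkk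
          exact Nat.find_min hex (show k - (n % k + 1) < k by omega)
            ⟨by omega, hkk⟩
        rw [succ_mod_of_lt hlt, Equiv.swap_apply_of_ne_of_ne h2 h1]
  intro hsc
  obtain ⟨n, hn⟩ := sc_pow.mp hsc
  rw [key n] at hn
  rcases Nat.eq_zero_or_pos (n % k) with hz | hpos
  · rw [hz, pow_zero] at hn; exact hab hn
  · exact Nat.find_min hex (Nat.mod_lt n hk0) ⟨hpos, hn⟩



/-- one step of `swap a b * σ` stays in the same cycle (merge case). -/
lemma sc_extend {σ : Perm (Fin t)} {a b : Fin t} (hab : a ≠ b)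
    (h : ¬ σ.SameCycle a b) {x y : Fin t} (hxy : σ.SameCycle x y) :
    (Equiv.swap a b * σ).SameCycle x y := by
  have hA2 := sameCycle_swap_mul_of_not hab h
  have step : ∀ z, (Equiv.swap a b * σ).SameCycle z (σ z) := by
    intro z
    by_cases h1 : σ z = a
    · have he : (Equiv.swap a b * σ) z = b := by
        rw [Equiv.Perm.mul_apply, h1, Equiv.swap_apply_left]
      have h2 : (Equiv.swap a b * σ).SameCycle z b := ⟨1, by simpa using he⟩
      rw [h1]
      exact h2.trans hA2.symm
    · by_cases h2 : σ z = b
      · have he : (Equiv.swap a b * σ) z = a := by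
          rw [Equiv.Perm.mul_apply, h2, Equiv.swap_apply_right]
        have h3 : (Equiv.swap a b * σ).SameCycle z a := ⟨1, by simpa using he⟩
        rw [h2]
        exact h3.trans hA2
      · refine ⟨1, ?_⟩
        simp only [zpow_one, Equiv.Perm.mul_apply]
        exact Equiv.swap_apply_of_ne_of_ne h1 h2
  obtain ⟨n, rfl⟩ := sc_pow.mp hxy
  clear hxy
  induction n with
  | zero => exact SameCycle.rfl
  | succ m ih =>
    rw [pow_succ_apply]
    exact ih.trans (step _)

/-- Full description of `SameCycle` after a merge. -/
lemma sc_swap_mul_iff {σ : Perm (Fin t)} {a b : Fin t} (hab : a ≠ b)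
    (h : ¬ σ.SameCycle a b) (x y : Fin t) :
    (Equiv.swap a b * σ).SameCycle x y ↔
      σ.SameCycle x y ∨ (σ.SameCycle x a ∧ σ.SameCycle b y) ∨
        (σ.SameCycle x b ∧ σ.SameCycle a y) := by
  have hA2 := sameCycle_swap_mul_of_not hab h
  constructor
  · set R : Fin t → Fin t → Prop := fun u v =>
      σ.SameCycle u v ∨ (σ.SameCycle u a ∧ σ.SameCycle b v) ∨
        (σ.SameCycle u b ∧ σ.SameCycle a v) with hR
    have htrans : ∀ {u v w}, R u v → R v w → R u w := by
      rintro u v w (huv | ⟨h1, h2⟩ | ⟨h1, h2⟩) (hvw | ⟨h3, h4⟩ | ⟨h3, h4⟩)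
      · exact Or.inl (huv.trans hvw)
      · exact Or.inr (Or.inl ⟨huv.trans h3, h4⟩)
      · exact Or.inr (Or.inr ⟨huv.trans h3, h4⟩)
      · exact Or.inr (Or.inl ⟨h1, h2.trans hvw⟩)
      · exact absurd (h2.trans h3).symm h
      · exact Or.inl (h1.trans h4)
      · exact Or.inr (Or.inr ⟨h1, h2.trans hvw⟩)
      · exact Or.inl (h1.trans h4)
      · exact absurd (h2.trans h3) h
    have hstep : ∀ w, R w ((Equiv.swap a b * σ) w) := by
      intro w
      by_cases h1 : σ w = a
      · have he : (Equiv.swap a b * σ) w = b := by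
          rw [Equiv.Perm.mul_apply, h1, Equiv.swap_apply_left]
        rw [he]
        exact Or.inr (Or.inl ⟨⟨1, by simpa using h1⟩, SameCycle.rfl⟩)
      · by_cases h2 : σ w = b
        · have he : (Equiv.swap a b * σ) w = a := by
            rw [Equiv.Perm.mul_apply, h2, Equiv.swap_apply_right]
          rw [he]
          exact Or.inr (Or.inr ⟨⟨1, by simpa using h2⟩, SameCycle.rfl⟩)
        · have he : (Equiv.swap a b * σ) w = σ w := by
            rw [Equiv.Perm.mul_apply]
            exact Equiv.swap_apply_of_ne_of_ne h1 h2
          rw [he]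
          exact Or.inl ⟨1, by simp⟩
    intro hsc
    obtain ⟨n, rfl⟩ := sc_pow.mp hsc
    clear hsc
    induction n with
    | zero => exact Or.inl SameCycle.rfl
    | succ m ih =>
      rw [pow_succ_apply]
      exact htrans ih (hstep _)
  · rintro (hxy | ⟨h1, h2⟩ | ⟨h1, h2⟩)
    · exact sc_extend hab h hxy
    · exact ((sc_extend hab h h1).trans hA2).trans (sc_extend hab h h2)
    · exact ((sc_extend hab h h1).trans hA2.symm).trans (sc_extend hab h h2)



lemma card_aux {A B : Type*} [Finite A] [Finite B] (f : A → B) (a₀ b₀ : A) (hne : a₀ ≠ b₀)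
    (heq : f a₀ = f b₀) (hsurj : Function.Surjective f)
    (hinj : ∀ x y, f x = f y → x = y ∨ (x = a₀ ∧ y = b₀) ∨ (x = b₀ ∧ y = a₀)) :
    Nat.card A = Nat.card B + 1 := by
  classical
  have e1 : Nat.card B = Nat.card {x : A // x ≠ b₀} := by
    refine (Nat.card_congr (Equiv.ofBijective (fun x : {x : A // x ≠ b₀} => f x.1)
      ⟨?_, ?_⟩)).symm
    · rintro ⟨x, hx⟩ ⟨y, hy⟩ hxy
      rcases hinj x y hxy with h | ⟨h1, h2⟩ | ⟨h1, h2⟩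
      · exact Subtype.ext h
      · exact absurd h2 hy
      · exact absurd h1 hx
    · intro b
      obtain ⟨x, rfl⟩ := hsurj b
      by_cases hx : x = b₀
      · exact ⟨⟨a₀, hne⟩, show f a₀ = f x by rw [heq, hx]⟩
      · exact ⟨⟨x, hx⟩, rfl⟩
  have e2 : Nat.card A = Nat.card {x : A // x = b₀} + Nat.card {x : A // x ≠ b₀} := by
    rw [← Nat.card_sum]
    exact Nat.card_congr (Equiv.sumCompl (· = b₀)).symm
  have e3 : Nat.card {x : A // x = b₀} = 1 := by
    rw [Nat.card_eq_one_iff_unique]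
    exact ⟨⟨fun x y => Subtype.ext (x.2.trans y.2.symm)⟩, ⟨⟨b₀, rfl⟩⟩⟩
  omega

lemma cyc_swap_mul_of_not {σ : Perm (Fin t)} {a b : Fin t} (hab : a ≠ b)
    (h : ¬ σ.SameCycle a b) : cyc (Equiv.swap a b * σ) + 1 = cyc σ := by
  classical
  set τ := Equiv.swap a b * σ with hτ
  let sσ := Equiv.Perm.SameCycle.setoid σ
  let sτ := Equiv.Perm.SameCycle.setoid τ
  let G : Quotient sσ → Quotient sτ :=
    Quotient.lift (fun x => Quotient.mk sτ x)
      (fun x y hxy => Quotient.sound (s := sτ) (sc_extend hab h hxy))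
  have hGmk : ∀ x : Fin t, G (Quotient.mk sσ x) = Quotient.mk sτ x := fun _ => rfl
  have key := card_aux G (Quotient.mk sσ a) (Quotient.mk sσ b)
    (fun hq => h (Quotient.exact (s := sσ) hq))
    (Quotient.sound (s := sτ) (sameCycle_swap_mul_of_not hab h))
    (fun q => Quotient.inductionOn (s := sτ) q (fun x => ⟨Quotient.mk sσ x, rfl⟩))
    (fun q1 q2 => Quotient.inductionOn₂ (s₁ := sσ) (s₂ := sσ) q1 q2 (fun x y hxy => by
      have hsc : τ.SameCycle x y := Quotient.exact (s := sτ) hxy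
      rcases (sc_swap_mul_iff hab h x y).mp hsc with h1 | ⟨h1, h2⟩ | ⟨h1, h2⟩
      · exact Or.inl (Quotient.sound (s := sσ) h1)
      · exact Or.inr (Or.inl ⟨Quotient.sound (s := sσ) h1,
          Quotient.sound (s := sσ) h2.symm⟩)
      · exact Or.inr (Or.inr ⟨Quotient.sound (s := sσ) h1,
          Quotient.sound (s := sσ) h2.symm⟩)))
  have key2 : cyc σ = cyc τ + 1 := key
  omega

lemma cyc_swap_mul_of {σ : Perm (Fin t)} {a b : Fin t} (hab : a ≠ b)
    (h : σ.SameCycle a b) : cyc (Equiv.swap a b * σ) = cyc σ + 1 := by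
  have h1 := not_sameCycle_swap_mul_of hab h
  have h2 := cyc_swap_mul_of_not hab h1
  rw [← mul_assoc, Equiv.swap_mul_self, one_mul] at h2
  omega

lemma cyc_le (σ : Perm (Fin t)) : cyc σ ≤ t := by
  have hs : Function.Surjective
      (fun x : Fin t => Quotient.mk (Equiv.Perm.SameCycle.setoid σ) x) :=
    fun q => Quotient.inductionOn (s := Equiv.Perm.SameCycle.setoid σ) q
      (fun x => ⟨x, rfl⟩)
  have := Nat.card_le_card_of_surjective _ hs
  simpa [cyc] using this

lemma cyc_one : cyc (1 : Perm (Fin t)) = t := by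
  have hb : Function.Bijective
      (fun x : Fin t => Quotient.mk (Equiv.Perm.SameCycle.setoid (1 : Perm (Fin t))) x) := by
    constructor
    · intro x y hxy
      have := Quotient.exact (s := Equiv.Perm.SameCycle.setoid (1 : Perm (Fin t))) hxy
      exact Equiv.Perm.sameCycle_one.mp this
    · exact fun q => Quotient.inductionOn
        (s := Equiv.Perm.SameCycle.setoid (1 : Perm (Fin t))) q (fun x => ⟨x, rfl⟩)
  have := Nat.card_congr (Equiv.ofBijective _ hb)
  simpa [cyc] using this.symm



lemma cyc_swap_mul_ge {σ : Perm (Fin t)} {a b : Fin t} (hab : a ≠ b) :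
    cyc σ ≤ cyc (Equiv.swap a b * σ) + 1 := by
  by_cases h : σ.SameCycle a b
  · have := cyc_swap_mul_of hab h
    omega
  · have := cyc_swap_mul_of_not hab h
    omega

lemma exists_factorization :
    ∀ n (σ : Perm (Fin t)), σ.support.card = n →
    ∃ L : List (Perm (Fin t)), L.length + cyc σ = t ∧
      (∀ τ ∈ L, ∃ a b : Fin t, a ≠ b ∧ a ∈ σ.support ∧ b ∈ σ.support ∧ τ = Equiv.swap a b) ∧
      L.prod = σ := by
  intro n
  induction n using Nat.strong_induction_on with
  | _ n ih =>
  intro σ hn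
  by_cases hσ : σ = 1
  · subst hσ
    exact ⟨[], by simpa using cyc_one, by simp, by simp⟩
  · have hx : ∃ x, σ x ≠ x := by
      by_contra hc
      push_neg at hc
      exact hσ (Equiv.ext hc)
    obtain ⟨x, hx⟩ := hx
    set σ' := Equiv.swap x (σ x) * σ with hσ'
    have hcard : σ'.support.card < n := hn ▸ Equiv.Perm.card_support_swap_mul hx
    obtain ⟨L', h1, h2, h3⟩ := ih σ'.support.card hcard σ' rfl
    have hne : x ≠ σ x := Ne.symm hx
    have hsc : σ.SameCycle x (σ x) := ⟨1, by simp⟩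
    have hcyc : cyc σ' = cyc σ + 1 := cyc_swap_mul_of hne hsc
    refine ⟨Equiv.swap x (σ x) :: L', by simp only [List.length_cons]; omega, ?_, ?_⟩
    · intro τ hτ
      rcases List.mem_cons.mp hτ with rfl | hτ'
      · exact ⟨x, σ x, hne, Equiv.Perm.mem_support.mpr hx,
          Equiv.Perm.apply_mem_support.mpr (Equiv.Perm.mem_support.mpr hx), rfl⟩
      · obtain ⟨a, b, ha1, ha2, ha3, ha4⟩ := h2 τ hτ'
        exact ⟨a, b, ha1, (Equiv.Perm.mem_support_swap_mul_imp_mem_support_ne ha2).1,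
          (Equiv.Perm.mem_support_swap_mul_imp_mem_support_ne ha3).1, ha4⟩
    · rw [List.prod_cons, h3, hσ', ← mul_assoc, Equiv.swap_mul_self, one_mul]

lemma transLen_eq (σ : Perm (Fin t)) : transLen σ = t - cyc σ := by
  obtain ⟨L, hlen, hsw, hprod⟩ := exists_factorization σ.support.card σ rfl
  have hmem : (t - cyc σ) ∈ {n | ∃ L : List (Equiv.Perm (Fin t)),
      L.length = n ∧ (∀ τ ∈ L, τ.IsSwap) ∧ L.prod = σ} := by
    refine ⟨L, by omega, fun τ hτ => ?_, hprod⟩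
    obtain ⟨a, b, h1, _, _, h4⟩ := hsw τ hτ
    exact ⟨a, b, h1, h4⟩
  have hlb : ∀ (M : List (Perm (Fin t))), (∀ τ ∈ M, τ.IsSwap) →
      t ≤ cyc M.prod + M.length := by
    intro M
    induction M with
    | nil => simpa using cyc_one.ge
    | cons τ M' ihM =>
      intro hM
      obtain ⟨a, b, hab, rfl⟩ := hM τ List.mem_cons_self
      have hIH := ihM (fun x hx => hM x (List.mem_cons_of_mem _ hx))
      have hD := cyc_swap_mul_ge (σ := M'.prod) hab
      rw [List.prod_cons, List.length_cons]
      omega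
  refine le_antisymm (Nat.sInf_le hmem) (le_csInf ⟨_, hmem⟩ ?_)
  rintro n ⟨M, hM1, hM2, hM3⟩
  have := hlb M hM2
  rw [hM3] at this
  subst hM1
  omega

lemma transLen_one : transLen (1 : Perm (Fin t)) = 0 := by
  rw [transLen_eq, cyc_one]; omega

lemma transLen_eq_zero {σ : Perm (Fin t)} (h : transLen σ = 0) : σ = 1 := by
  obtain ⟨L, hlen, _, hprod⟩ := exists_factorization σ.support.card σ rfl
  rw [transLen_eq] at h
  have hc := cyc_le σ
  have : L.length = 0 := by omega
  rw [List.length_eq_zero_iff] at this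
  subst this
  simpa using hprod.symm

lemma transLen_swap_mul_le {σ : Perm (Fin t)} {a b : Fin t} (hab : a ≠ b) :
    transLen (Equiv.swap a b * σ) ≤ transLen σ + 1 := by
  rw [transLen_eq, transLen_eq]
  have h1 := cyc_swap_mul_ge (σ := σ) hab
  have h2 := cyc_le σ
  have h3 := cyc_le (Equiv.swap a b * σ)
  omega



lemma main_induction {l : ℕ} (ρ : Perm (Fin t))
    (hstruct : ∀ a b : Fin t, (a : ℕ) < l → (b : ℕ) < l → a ≠ b → ¬ρ.SameCycle a b) :
    ∀ n (lam : Perm (Fin t)), (∀ i : Fin t, l ≤ (i : ℕ) → lam i = i) → transLen lam = n →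
      transLen (lam * ρ) = transLen lam + transLen ρ ∧
      ∀ a b : Fin t, (a : ℕ) < l → (b : ℕ) < l →
        ((lam * ρ).SameCycle a b ↔ lam.SameCycle a b) := by
  intro n
  induction n using Nat.strong_induction_on with
  | _ n ih =>
  intro lam hcond hlen
  rcases Nat.eq_zero_or_pos n with rfl | hpos
  · have h1 : lam = 1 := transLen_eq_zero hlen
    subst h1
    refine ⟨by rw [one_mul, transLen_one, zero_add], ?_⟩
    intro a b ha hb
    rw [one_mul, Equiv.Perm.sameCycle_one]
    constructor
    · intro hsc
      by_contra hne
      exact hstruct a b ha hb hne hsc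
    · rintro rfl
      exact SameCycle.rfl
  · -- positive case
    obtain ⟨L, hLlen, hLsw, hLprod⟩ := exists_factorization lam.support.card lam rfl
    have hlamlen : transLen lam = n := hlen
    have hcycle : t - cyc lam = n := by rw [← transLen_eq lam]; exact hlen
    have hLn : L.length = n := by
      have := cyc_le lam; omega
    -- L is nonempty
    rcases L with _ | ⟨τ, L'⟩
    · simp at hLn; omega
    obtain ⟨a, b, hab, haS, hbS, rfl⟩ := hLsw _ List.mem_cons_self
    set lam' := L'.prod with hlam'
    have hlam_eq : lam = Equiv.swap a b * lam' := by
      rw [← hLprod, List.prod_cons]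
    -- a b have small indices
    have hsupp : ∀ z : Fin t, z ∈ lam.support → (z : ℕ) < l := by
      intro z hz
      by_contra hc
      push_neg at hc
      exact (Equiv.Perm.mem_support.mp hz) (hcond z hc)
    have ha' : (a : ℕ) < l := hsupp a haS
    have hb' : (b : ℕ) < l := hsupp b hbS
    -- lam' satisfies the condition
    have hcond' : ∀ i : Fin t, l ≤ (i : ℕ) → lam' i = i := by
      intro i hi
      have h1 : lam' = Equiv.swap a b * lam := by
        rw [hlam_eq, ← mul_assoc, Equiv.swap_mul_self, one_mul]
      rw [h1, Equiv.Perm.mul_apply, hcond i hi]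
      refine Equiv.swap_apply_of_ne_of_ne ?_ ?_
      · intro hh; rw [hh] at hi; omega
      · intro hh; rw [hh] at hi; omega
    -- transLen lam' = n - 1
    have hlam'le : transLen lam' ≤ n - 1 := by
      apply Nat.sInf_le
      refine ⟨L', by simpa using hLn.symm ▸ rfl, fun τ hτ => ?_, rfl⟩
      obtain ⟨c, d, hc1, _, _, hc4⟩ := hLsw τ (List.mem_cons_of_mem _ hτ)
      exact ⟨c, d, hc1, hc4⟩
    have hlam'ge : n ≤ transLen lam' + 1 := by
      have := transLen_swap_mul_le (σ := lam') hab
      rw [← hlam_eq, hlamlen] at this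
      omega
    have hlam'len : transLen lam' = n - 1 := by omega
    obtain ⟨IH1, IH2⟩ := ih (n - 1) (by omega) lam' hcond' hlam'len
    -- lam' does not connect a b
    have hnotSC : ¬ lam'.SameCycle a b := by
      intro hsc
      have hsplit : cyc lam = cyc lam' + 1 := by
        rw [hlam_eq]; exact cyc_swap_mul_of hab hsc
      have hc1 : t - cyc lam' = n - 1 := by rw [← transLen_eq lam']; exact hlam'len
      have hc2 := cyc_le lam'
      have hc3 := cyc_le lam
      omega
    have hSCab' : ¬ (lam' * ρ).SameCycle a b := fun hh => hnotSC ((IH2 a b ha' hb').mp hh)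
    have hmerge : cyc (lam * ρ) + 1 = cyc (lam' * ρ) := by
      rw [hlam_eq, mul_assoc]
      exact cyc_swap_mul_of_not hab hSCab'
    constructor
    · rw [transLen_eq (lam * ρ), hlamlen]
      have hIH1' : t - cyc (lam' * ρ) = (n - 1) + transLen ρ := by
        rw [← transLen_eq (lam' * ρ), IH1, hlam'len]
      have hc2 := cyc_le (lam' * ρ)
      omega
    · intro x y hx hy
      rw [hlam_eq, mul_assoc, sc_swap_mul_iff hab hSCab', sc_swap_mul_iff hab hnotSC,
        IH2 x y hx hy, IH2 x a hx ha', IH2 b y hb' hy, IH2 x b hx hb', IH2 a y ha' hy]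

theorem stmt_3' (l t : ℕ) (hl : 0 < l) (hlt : l ≤ t) (ρ₀ : Equiv.Perm (Fin t)) :
    ∃ ρ : Equiv.Perm (Fin t),
      (∃ lam : Equiv.Perm (Fin t), (∀ i : Fin t, l ≤ (i : ℕ) → lam i = i) ∧ ρ = lam * ρ₀) ∧
      ∀ lam : Equiv.Perm (Fin t), (∀ i : Fin t, l ≤ (i : ℕ) → lam i = i) →
        transLen (lam * ρ) = transLen lam + transLen ρ := by
  classical
  set S : Set ℕ :=
    {n | ∃ lam : Equiv.Perm (Fin t), (∀ i : Fin t, l ≤ (i : ℕ) → lam i = i) ∧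
      transLen (lam * ρ₀) = n} with hS
  have hSne : S.Nonempty := ⟨transLen (1 * ρ₀), 1, fun i _ => rfl, rfl⟩
  obtain ⟨lam₀, hcond₀, hlen₀⟩ := Nat.sInf_mem hSne
  set ρ := lam₀ * ρ₀ with hρ
  have hmin : ∀ lam : Equiv.Perm (Fin t), (∀ i : Fin t, l ≤ (i : ℕ) → lam i = i) →
      transLen ρ ≤ transLen (lam * ρ) := by
    intro lam hc
    have hmem : transLen (lam * ρ) ∈ S := by
      refine ⟨lam * lam₀, fun i hi => ?_, by rw [mul_assoc]⟩
      rw [Equiv.Perm.mul_apply, hcond₀ i hi, hc i hi]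
    calc transLen ρ = sInf S := hlen₀
    _ ≤ _ := Nat.sInf_le hmem
  have hstruct : ∀ a b : Fin t, (a : ℕ) < l → (b : ℕ) < l → a ≠ b → ¬ρ.SameCycle a b := by
    intro a b ha hb hab hsc
    have hsplit := cyc_swap_mul_of hab hsc
    have hle := cyc_le (Equiv.swap a b * ρ)
    have h2 : transLen (Equiv.swap a b * ρ) < transLen ρ := by
      rw [transLen_eq, transLen_eq, hsplit]
      omega
    have hcsw : ∀ i : Fin t, l ≤ (i : ℕ) → (Equiv.swap a b) i = i := by
      intro i hi
      refine Equiv.swap_apply_of_ne_of_ne ?_ ?_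
      · intro hh; rw [hh] at hi; omega
      · intro hh; rw [hh] at hi; omega
    exact absurd (hmin (Equiv.swap a b) hcsw) (not_le.mpr h2)
  refine ⟨ρ, ⟨lam₀, hcond₀, rfl⟩, ?_⟩
  intro lam hc
  exact (main_induction ρ hstruct (transLen lam) lam hc rfl).1

end StmtAux

/-- Coset decomposition. For `l ≤ t`, each right coset of `S_l`
(the subgroup of permutations fixing all points with index `≥ l`) in `S_t`
contains a minimal representative `ρ` with `|λρ| = |λ| + |ρ|` for all `λ ∈ S_l`. -/
theorem stmt_3 (l t : ℕ) (hl : 0 < l) (hlt : l ≤ t) (ρ₀ : Equiv.Perm (Fin t)) :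
    ∃ ρ : Equiv.Perm (Fin t),
      (∃ lam : Equiv.Perm (Fin t), (∀ i : Fin t, l ≤ (i : ℕ) → lam i = i) ∧ ρ = lam * ρ₀) ∧
      ∀ lam : Equiv.Perm (Fin t), (∀ i : Fin t, l ≤ (i : ℕ) → lam i = i) →
        transLen (lam * ρ) = transLen lam + transLen ρ :=
  StmtAux.stmt_3' l t hl hlt ρ₀
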